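/- For every d ≥ 3 there exists a norm on ℝ^d whose collection of closed balls has infinite VC dimension; equivalently, there is a symmetric convex body F ⊆ ℝ^d such that the family {λF + r : λ > 0, r ∈ ℝ^d} has infinite VC dimension. -/

import Mathlib

/-- A collection `C` of subsets of `Ω` shatters a finite set `S` if every subset of `S`
is carved out by some member of `C`. -/
def Shatters {Ω : Type*} (C : Set (Set Ω)) (S : Finset Ω) : Prop :=
  ∀ A ⊆ S, ∃ c ∈ C, (S : Set Ω) ∩ c = (A : Set Ω)


noncomputable section VCAux
open Real

/-- Enumeration of nonempty finite subsets of ℕ. -/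
def AAset (k : ℕ) : Finset ℕ :=
  (Encodable.decode (α := Finset ℕ) k).elim {0} (fun B => if B.Nonempty then B else {0})

lemma AAset_encode {A : Finset ℕ} (hA : A.Nonempty) : AAset (Encodable.encode A) = A := by
  simp [AAset, Encodable.encodek, hA]

def aaa (j : ℕ) : ℝ := (1/2 : ℝ)^j

def gam (k : ℕ) : ℝ := (1/2 : ℝ)^((AAset k).sup id + 1)

def ccc (k : ℕ) : ℝ := Real.cos (gam k)

lemma gam_pos (k : ℕ) : 0 < gam k := by simp only [gam]; positivity

lemma gam_le_half (k : ℕ) : gam k ≤ 1/2 := by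
  have : (1/2 : ℝ)^((AAset k).sup id + 1) ≤ (1/2:ℝ)^1 :=
    pow_le_pow_of_le_one (by norm_num) (by norm_num) (by omega)
  simpa [gam] using this

lemma ccc_pos (k : ℕ) : 0 < ccc k := by
  apply Real.cos_pos_of_mem_Ioo
  constructor
  · have := pi_gt_three; have := gam_pos k; nlinarith
  · have := pi_gt_three; have := gam_le_half k; nlinarith

lemma ccc_lt_one (k : ℕ) : ccc k < 1 := by
  have h := Real.cos_lt_cos_of_nonneg_of_le_pi (le_refl 0)
    (le_trans (gam_le_half k) (by have := pi_gt_three; linarith)) (gam_pos k)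
  simpa [ccc] using h

lemma ccc_le_one (k : ℕ) : ccc k ≤ 1 := (ccc_lt_one k).le

def eps : ℕ → ℝ
  | 0 => 1
  | k+1 => eps k * ccc k / 4

def spv : ℕ → ℝ
  | 0 => 1
  | k+1 => spv k * eps k * ccc k / 8

def sgm (k : ℕ) : ℝ := spv (k+1)

def ttt (k : ℕ) : ℝ := 1 - sgm k

lemma eps_pos (k : ℕ) : 0 < eps k := by
  induction k with
  | zero => norm_num [eps]
  | succ k ih => have := ccc_pos k; simp only [eps]; positivity

lemma eps_le_one (k : ℕ) : eps k ≤ 1 := by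
  induction k with
  | zero => norm_num [eps]
  | succ k ih =>
    have h1 := ccc_le_one k; have h2 := ccc_pos k; have h3 := eps_pos k
    have h6 : eps k * ccc k ≤ 1 := mul_le_one₀ ih h2.le h1
    simp only [eps]; linarith

lemma eps_succ_le (k : ℕ) : eps (k+1) ≤ eps k := by
  have h1 := ccc_le_one k; have h2 := ccc_pos k; have h3 := eps_pos k
  simp only [eps]; nlinarith

lemma eps_antitone : ∀ {j k : ℕ}, j ≤ k → eps k ≤ eps j := by
  intro j k h
  induction k with
  | zero => simp_all
  | succ k ih =>
    rcases Nat.lt_or_ge j (k+1) with h' | h'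
    · exact le_trans (eps_succ_le k) (ih (by omega))
    · have : j = k+1 := by omega
      simp [this]

lemma spv_pos (k : ℕ) : 0 < spv k := by
  induction k with
  | zero => norm_num [spv]
  | succ k ih => have := ccc_pos k; have := eps_pos k; simp only [spv]; positivity

lemma spv_le_one (k : ℕ) : spv k ≤ 1 := by
  induction k with
  | zero => norm_num [spv]
  | succ k ih =>
    have h1 := ccc_le_one k; have h2 := ccc_pos k; have h3 := eps_pos k
    have h4 := eps_le_one k; have h5 := spv_pos k
    have h6 : spv k * eps k * ccc k ≤ 1 := mul_le_one₀ (mul_le_one₀ ih h3.le h4) h2.le h1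
    simp only [spv]; linarith

lemma spv_succ_le (k : ℕ) : spv (k+1) ≤ spv k := by
  have h1 := ccc_le_one k; have h2 := ccc_pos k; have h3 := eps_pos k
  have h4 := eps_le_one k; have h5 := spv_pos k
  have h6 : eps k * ccc k ≤ 1 := mul_le_one₀ h4 h2.le h1
  have h7 : spv k * (eps k * ccc k) ≤ spv k * 1 := mul_le_mul_of_nonneg_left h6 h5.le
  simp only [spv]; nlinarith

lemma spv_antitone : ∀ {j k : ℕ}, j ≤ k → spv k ≤ spv j := by
  intro j k h
  induction k with
  | zero => simp_all
  | succ k ih =>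
    rcases Nat.lt_or_ge j (k+1) with h' | h'
    · exact le_trans (spv_succ_le k) (ih (by omega))
    · have : j = k+1 := by omega
      simp [this]

lemma sgm_eq (k : ℕ) : sgm k = spv k * eps k * ccc k / 8 := rfl

lemma sgm_pos (k : ℕ) : 0 < sgm k := spv_pos (k+1)

lemma sgm_le (k : ℕ) : sgm k ≤ spv k / 8 := by
  have h1 := ccc_le_one k; have h2 := ccc_pos k; have h3 := eps_pos k
  have h4 := eps_le_one k; have h5 := spv_pos k
  have h6 : eps k * ccc k ≤ 1 := mul_le_one₀ h4 h2.le h1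
  have h7 : spv k * (eps k * ccc k) ≤ spv k * 1 := mul_le_mul_of_nonneg_left h6 h5.le
  rw [sgm_eq]; nlinarith

lemma sgm_le_eighth (k : ℕ) : sgm k ≤ 1/8 := by
  have := sgm_le k; have := spv_le_one k; linarith

lemma ttt_lt_one (k : ℕ) : ttt k < 1 := by
  have := sgm_pos k; simp only [ttt]; linarith

lemma ttt_ge (k : ℕ) : 7/8 ≤ ttt k := by
  have := sgm_le_eighth k; simp only [ttt]; linarith

lemma ttt_pos (k : ℕ) : 0 < ttt k := lt_of_lt_of_le (by norm_num) (ttt_ge k)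

/-- Key condition 1: for levels below `k`. -/
lemma cond1 {j k : ℕ} (hjk : j < k) : 1 ≤ (2 / spv k) * (ttt k - ttt j) := by
  have h1 : ttt k - ttt j = sgm j - sgm k := by simp only [ttt]; ring
  have h2 : spv k ≤ sgm j := spv_antitone (by omega)
  have h3 : sgm k ≤ spv k / 8 := sgm_le k
  have h5 := spv_pos k
  have key : spv k * (7/8) ≤ sgm j - sgm k := by linarith
  have h6 : (2/spv k) * (spv k * (7/8)) ≤ (2/spv k) * (sgm j - sgm k) :=
    mul_le_mul_of_nonneg_left key (by positivity)
  have heq : (2 / spv k) * (spv k * (7/8)) = 7/4 := by field_simp; ring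
  rw [h1]; linarith

/-- Key condition 2: for levels above `k`. -/
lemma cond2 (k : ℕ) : eps (k+1) + (2 / spv k) * sgm k ≤ eps k * ccc k := by
  have h5 := spv_pos k
  have heps : eps (k+1) = eps k * ccc k / 4 := rfl
  have hs : (2 / spv k) * sgm k = eps k * ccc k / 4 := by
    rw [sgm_eq]; field_simp; ring
  have := eps_pos k; have := ccc_pos k
  rw [heps, hs]; nlinarith

lemma spv_s_ge_two (k : ℕ) : 2 ≤ 2 / spv k := by
  have h1 := spv_pos k; have h2 := spv_le_one k
  rw [le_div_iff₀ h1]; linarith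

/-- gap lemma -/
lemma aaa_gap {N j m : ℕ} (hj : j ≤ N) (hjm : j ≠ m) :
    (1/2:ℝ)^(N+1) ≤ |aaa m - aaa j| ∧ |aaa m - aaa j| ≤ 1 := by
  have hmono : ∀ {p q : ℕ}, p ≤ q → (1/2:ℝ)^q ≤ (1/2:ℝ)^p := by
    intro p q h; exact pow_le_pow_of_le_one (by norm_num) (by norm_num) h
  have hub : ∀ p : ℕ, (1/2:ℝ)^p ≤ 1 := fun p => by
    simpa using hmono (Nat.zero_le p)
  have hpos : ∀ p : ℕ, (0:ℝ) < (1/2:ℝ)^p := fun p => by positivity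
  have hua : ∀ p, aaa p = (1/2:ℝ)^p := fun p => rfl
  constructor
  · rcases Nat.lt_or_ge j m with h | h
    · have h1 : (1/2:ℝ)^m ≤ (1/2:ℝ)^(j+1) := hmono (by omega)
      have h2 : (1/2:ℝ)^(j+1) + (1/2:ℝ)^(j+1) = (1/2:ℝ)^j := by rw [pow_succ]; ring
      have h3 : (1/2:ℝ)^(N+1) ≤ (1/2:ℝ)^(j+1) := hmono (by omega)
      rw [abs_sub_comm, abs_of_nonneg (by rw [hua, hua]; linarith [hpos (j+1)]), hua, hua]
      linarith
    · have hmj : m < j := by omega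
      have h1 : (1/2:ℝ)^j ≤ (1/2:ℝ)^(m+1) := hmono (by omega)
      have h2 : (1/2:ℝ)^(m+1) + (1/2:ℝ)^(m+1) = (1/2:ℝ)^m := by rw [pow_succ]; ring
      have h3 : (1/2:ℝ)^(N+1) ≤ (1/2:ℝ)^(m+1) := hmono (by omega)
      rw [abs_of_nonneg (by rw [hua, hua]; linarith [hpos (m+1)]), hua, hua]
      linarith
  · have h1 := hub m; have h2 := hub j; have h3 := hpos m; have h4 := hpos j
    rw [abs_le]; constructor <;> rw [hua, hua] <;> linarith

/-- cosine separation at level k -/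
lemma cos_bound {k j m : ℕ} (hj : j ∈ AAset k) (hm : m ∉ AAset k) :
    |Real.cos (aaa m - aaa j)| ≤ ccc k := by
  have hjN : j ≤ (AAset k).sup id := Finset.le_sup (f := id) hj
  have hjm : j ≠ m := fun h => hm (h ▸ hj)
  obtain ⟨hg, h1⟩ := aaa_gap (N := (AAset k).sup id) hjN hjm
  have hpi := pi_gt_three
  have hcospos : 0 < Real.cos (aaa m - aaa j) := by
    apply Real.cos_pos_of_mem_Ioo
    rw [abs_le] at h1
    constructor
    · nlinarith [h1.1]
    · nlinarith [h1.2]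
  rw [abs_of_pos hcospos, ← Real.cos_abs]
  exact Real.cos_le_cos_of_nonneg_of_le_pi (le_of_lt (gam_pos k)) (by linarith) hg


open RealInnerProductSpace

variable {d : ℕ}

def sing (i : Fin d) : EuclideanSpace ℝ (Fin d) := EuclideanSpace.single i 1

def Qp (i0 i1 : Fin d) (j : ℕ) : EuclideanSpace ℝ (Fin d) :=
  Real.cos (aaa j) • sing i0 + Real.sin (aaa j) • sing i1

def uu (i0 i1 i2 : Fin d) (m : ℕ) (s : ℝ) : EuclideanSpace ℝ (Fin d) :=
  Qp i0 i1 m + s • sing i2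

/-- the level points -/
def XL (i0 i1 i2 : Fin d) : Set (EuclideanSpace ℝ (Fin d)) :=
  {v | ∃ k j, j ∈ AAset k ∧ ∃ s1 s2 : ℝ, (s1 = 1 ∨ s1 = -1) ∧ (s2 = 1 ∨ s2 = -1) ∧
    v = (s1 * eps k) • Qp i0 i1 j + (s2 * ttt k) • sing i2}

/-- the extra points giving full dimension -/
def XE (d : ℕ) : Set (EuclideanSpace ℝ (Fin d)) :=
  ⋃ i : Fin d, {(4⁻¹:ℝ) • sing i, -((4⁻¹:ℝ) • sing i)}

def XX (i0 i1 i2 : Fin d) : Set (EuclideanSpace ℝ (Fin d)) := XL i0 i1 i2 ∪ XE d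

def FF (i0 i1 i2 : Fin d) : Set (EuclideanSpace ℝ (Fin d)) :=
  closure (convexHull ℝ (XX i0 i1 i2))

lemma inner_sing (i i' : Fin d) : ⟪sing i, sing i'⟫ = if i = i' then (1:ℝ) else 0 := by
  simp only [sing]
  rw [EuclideanSpace.inner_single_left]
  simp [EuclideanSpace.single_apply, eq_comm]

lemma norm_sing (i : Fin d) : ‖(sing i : EuclideanSpace ℝ (Fin d))‖ = 1 := by
  simp [sing]

lemma norm_Qp_le (i0 i1 : Fin d) (j : ℕ) : ‖Qp i0 i1 j‖ ≤ 2 := by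
  have h1 := Real.abs_cos_le_one (aaa j)
  have h2 := Real.abs_sin_le_one (aaa j)
  calc ‖Qp i0 i1 j‖ ≤ ‖Real.cos (aaa j) • (sing i0 : EuclideanSpace ℝ (Fin d))‖
        + ‖Real.sin (aaa j) • (sing i1 : EuclideanSpace ℝ (Fin d))‖ := norm_add_le _ _
    _ ≤ 2 := by rw [norm_smul, norm_smul, norm_sing, norm_sing]; simp [Real.norm_eq_abs]; linarith

lemma inner_uu_Qp (i0 i1 i2 : Fin d) (h01 : i0 ≠ i1) (h02 : i0 ≠ i2) (h12 : i1 ≠ i2)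
    (m : ℕ) (s : ℝ) (j : ℕ) :
    ⟪uu i0 i1 i2 m s, Qp i0 i1 j⟫ = Real.cos (aaa m - aaa j) := by
  simp only [uu, Qp]
  rw [Real.cos_sub]
  simp only [inner_add_left, inner_add_right, real_inner_smul_left, real_inner_smul_right,
    inner_sing]
  simp [h01, h02, h12, h01.symm, h02.symm, h12.symm]
  ring

lemma inner_uu_sing2 (i0 i1 i2 : Fin d) (h01 : i0 ≠ i1) (h02 : i0 ≠ i2) (h12 : i1 ≠ i2)
    (m : ℕ) (s : ℝ) :
    ⟪uu i0 i1 i2 m s, sing i2⟫ = s := by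
  simp only [uu, Qp]
  simp only [inner_add_left, real_inner_smul_left, inner_sing]
  simp [h01, h02, h12, h01.symm, h02.symm, h12.symm]

lemma inner_uu_sing_bound (i0 i1 i2 : Fin d) (h01 : i0 ≠ i1) (h02 : i0 ≠ i2) (h12 : i1 ≠ i2)
    (m : ℕ) (s : ℝ) (hs : 2 ≤ s) (i : Fin d) :
    |⟪uu i0 i1 i2 m s, sing i⟫| ≤ s := by
  have h1 := Real.abs_cos_le_one (aaa m)
  have h2 := Real.abs_sin_le_one (aaa m)
  simp only [uu, Qp, inner_add_left, real_inner_smul_left, inner_sing]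
  rcases eq_or_ne i0 i with e0 | e0 <;> rcases eq_or_ne i1 i with e1 | e1 <;>
    rcases eq_or_ne i2 i with e2 | e2
  · exact absurd (e0.trans e1.symm) h01
  · exact absurd (e0.trans e1.symm) h01
  · exact absurd (e0.trans e2.symm) h02
  · simp only [e0, if_pos rfl, if_true, if_neg e1, if_neg e2, mul_one, mul_zero, add_zero]
    rw [abs_le] at *; constructor <;> nlinarith
  · exact absurd (e1.trans e2.symm) h12
  · simp only [if_neg e0, e1, if_pos rfl, if_true, if_neg e2, mul_one, mul_zero, add_zero, zero_add]
    rw [abs_le] at *; constructor <;> nlinarith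
  · simp only [if_neg e0, if_neg e1, e2, if_pos rfl, if_true, mul_one, mul_zero, add_zero, zero_add]
    rw [abs_le] at *; constructor <;> nlinarith
  · simp only [if_neg e0, if_neg e1, if_neg e2, mul_zero, add_zero, zero_add]
    rw [abs_le]; constructor <;> nlinarith

lemma separation (i0 i1 i2 : Fin d) (h01 : i0 ≠ i1) (h02 : i0 ≠ i2) (h12 : i1 ≠ i2)
    {k m : ℕ} (hm : m ∉ AAset k) :
    ∀ x ∈ XX i0 i1 i2,
      ⟪uu i0 i1 i2 m (2 / spv k), x⟫ ≤ eps k * ccc k + ttt k * (2 / spv k) := by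
  set s := 2 / spv k with hsdef
  have hs2 : 2 ≤ s := spv_s_ge_two k
  have hspos : 0 < s := lt_of_lt_of_le (by norm_num) hs2
  rintro x (⟨k', j, hj, s1, s2, hs1, hs2', rfl⟩ | hx)
  · rw [inner_add_right, real_inner_smul_right, real_inner_smul_right,
      inner_uu_Qp i0 i1 i2 h01 h02 h12, inner_uu_sing2 i0 i1 i2 h01 h02 h12]
    set c := Real.cos (aaa m - aaa j) with hc
    have hcos : |c| ≤ 1 := Real.abs_cos_le_one _
    have e1 := eps_pos k'
    have t1 := ttt_pos k'
    have habs1 : |s1| = 1 := by rcases hs1 with h | h <;> rw [h] <;> norm_num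
    have habs2 : |s2| = 1 := by rcases hs2' with h | h <;> rw [h] <;> norm_num
    have hA : s1 * eps k' * c ≤ eps k' * |c| := by
      calc s1 * eps k' * c ≤ |s1 * eps k' * c| := le_abs_self _
        _ = eps k' * |c| := by
          rw [abs_mul, abs_mul, habs1, abs_of_pos e1, one_mul]
    have hB : s2 * ttt k' * s ≤ ttt k' * s := by
      calc s2 * ttt k' * s ≤ |s2 * ttt k' * s| := le_abs_self _
        _ = ttt k' * s := by
          rw [abs_mul, abs_mul, habs2, abs_of_pos t1, abs_of_pos hspos, one_mul]
    rcases lt_trichotomy k' k with hlt | heq | hgt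
    · have h1 : eps k' ≤ 1 := eps_le_one k'
      have hc1 := cond1 hlt
      have hec : 0 ≤ eps k * ccc k := mul_nonneg (eps_pos k).le (ccc_pos k).le
      have hA2 : s1 * eps k' * c ≤ 1 := le_trans hA (by nlinarith)
      have h3 : ttt k' * s ≤ ttt k * s - 1 := by nlinarith
      linarith
    · rw [heq] at hj e1 hA hB ⊢
      have hcc : |c| ≤ ccc k := cos_bound hj hm
      have hA2 : s1 * eps k * c ≤ eps k * ccc k :=
        le_trans hA (mul_le_mul_of_nonneg_left hcc e1.le)
      linarith
    · have h1 : eps k' ≤ eps (k+1) := eps_antitone hgt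
      have h2 : ttt k' ≤ ttt k + sgm k := by
        have := ttt_lt_one k'
        simp only [ttt]; simp only [ttt] at this; linarith
      have hc2 := cond2 k
      have hA2 : s1 * eps k' * c ≤ eps (k+1) := le_trans hA (by nlinarith)
      have h3 : ttt k' * s ≤ (ttt k + sgm k) * s := mul_le_mul_of_nonneg_right h2 hspos.le
      nlinarith
  · obtain ⟨i, hi⟩ := Set.mem_iUnion.mp hx
    have hb := abs_le.mp (inner_uu_sing_bound i0 i1 i2 h01 h02 h12 m s hs2 i)
    have h78 : (7:ℝ)/8 ≤ ttt k := ttt_ge k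
    have hec : 0 ≤ eps k * ccc k := mul_nonneg (eps_pos k).le (ccc_pos k).le
    have key : s/4 ≤ ttt k * s := by nlinarith
    rcases hi with h | h
    · rw [h, real_inner_smul_right]
      have := hb.2; linarith
    · simp only [Set.mem_singleton_iff] at h
      rw [h, inner_neg_right, real_inner_smul_right]
      have := hb.1; linarith

lemma inner_target (i0 i1 i2 : Fin d) (h01 : i0 ≠ i1) (h02 : i0 ≠ i2) (h12 : i1 ≠ i2)
    (m k : ℕ) (s : ℝ) :
    ⟪uu i0 i1 i2 m s, eps k • Qp i0 i1 m + ttt k • sing i2⟫ = eps k + ttt k * s := by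
  rw [inner_add_right, real_inner_smul_right, real_inner_smul_right,
    inner_uu_Qp i0 i1 i2 h01 h02 h12, inner_uu_sing2 i0 i1 i2 h01 h02 h12, sub_self,
    Real.cos_zero, mul_one]

lemma exclusion (i0 i1 i2 : Fin d) (h01 : i0 ≠ i1) (h02 : i0 ≠ i2) (h12 : i1 ≠ i2)
    {k m : ℕ} (hm : m ∉ AAset k) :
    eps k • Qp i0 i1 m + ttt k • sing i2 ∉ FF i0 i1 i2 := by
  intro hmem
  set s := 2 / spv k with hsdef
  set u := uu i0 i1 i2 m s with hu
  set cstar := eps k * ccc k + ttt k * s with hcstar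
  have hlin : IsLinearMap ℝ (fun x : EuclideanSpace ℝ (Fin d) => ⟪u, x⟫) :=
    ⟨fun a b => inner_add_right u a b, fun r x => real_inner_smul_right u x r⟩
  have hhalf : FF i0 i1 i2 ⊆ {x | ⟪u, x⟫ ≤ cstar} := by
    apply closure_minimal
    · exact convexHull_min (separation i0 i1 i2 h01 h02 h12 hm) (convex_halfSpace_le hlin cstar)
    · have : {x : EuclideanSpace ℝ (Fin d) | ⟪u, x⟫ ≤ cstar} =
          (innerSL ℝ u) ⁻¹' (Set.Iic cstar) := rfl
      rw [this]
      exact IsClosed.preimage (innerSL ℝ u).continuous isClosed_Iic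
  have h1 := hhalf hmem
  rw [Set.mem_setOf_eq, inner_target i0 i1 i2 h01 h02 h12] at h1
  have := eps_pos k
  have := ccc_lt_one k
  nlinarith

lemma aaa_pos (j : ℕ) : 0 < aaa j := by simp only [aaa]; positivity

lemma aaa_le_one (j : ℕ) : aaa j ≤ 1 := by
  simp only [aaa]
  exact pow_le_one₀ (by norm_num) (by norm_num)

lemma xx_norm_le (i0 i1 i2 : Fin d) : ∀ x ∈ XX i0 i1 i2, ‖x‖ ≤ 3 := by
  rintro x (⟨k, j, hj, s1, s2, hs1, hs2, rfl⟩ | hx)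
  · have h1 : |s1| = 1 := by rcases hs1 with h | h <;> rw [h] <;> norm_num
    have h2 : |s2| = 1 := by rcases hs2 with h | h <;> rw [h] <;> norm_num
    have e1 := eps_pos k
    have e2 := eps_le_one k
    have t1 := ttt_pos k
    have t2 := (ttt_lt_one k).le
    have hQ := norm_Qp_le i0 i1 j
    have hQ0 : (0:ℝ) ≤ ‖Qp i0 i1 j‖ := norm_nonneg _
    calc ‖(s1 * eps k) • Qp i0 i1 j + (s2 * ttt k) • sing i2‖
        ≤ ‖(s1 * eps k) • Qp i0 i1 j‖ + ‖(s2 * ttt k) • (sing i2 : EuclideanSpace ℝ (Fin d))‖ :=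
          norm_add_le _ _
      _ ≤ 3 := by
          rw [norm_smul, norm_smul, norm_sing, mul_one, Real.norm_eq_abs, Real.norm_eq_abs,
            abs_mul, abs_mul, h1, h2, one_mul, one_mul, abs_of_pos e1, abs_of_pos t1]
          nlinarith
  · obtain ⟨i, hi⟩ := Set.mem_iUnion.mp hx
    have : ‖(4⁻¹:ℝ) • (sing i : EuclideanSpace ℝ (Fin d))‖ ≤ 3 := by
      rw [norm_smul, norm_sing, mul_one, Real.norm_eq_abs, abs_of_nonneg (by norm_num)]
      norm_num
    rcases hi with h | h
    · rw [h]; exact this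
    · simp only [Set.mem_singleton_iff] at h
      rw [h, norm_neg]; exact this

lemma ff_bounded (i0 i1 i2 : Fin d) : FF i0 i1 i2 ⊆ Metric.closedBall 0 3 := by
  apply closure_minimal _ Metric.isClosed_closedBall
  apply convexHull_min _ (convex_closedBall 0 3)
  intro x hx
  rw [Metric.mem_closedBall, dist_zero_right]
  exact xx_norm_le i0 i1 i2 x hx

lemma xx_neg (i0 i1 i2 : Fin d) : ∀ x ∈ XX i0 i1 i2, -x ∈ XX i0 i1 i2 := by
  rintro x (⟨k, j, hj, s1, s2, hs1, hs2, rfl⟩ | hx)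
  · left
    refine ⟨k, j, hj, -s1, -s2, ?_, ?_, ?_⟩
    · rcases hs1 with h | h <;> simp [h]
    · rcases hs2 with h | h <;> simp [h]
    · rw [neg_mul, neg_mul, neg_smul, neg_smul, ← neg_add]
  · right
    obtain ⟨i, hi⟩ := Set.mem_iUnion.mp hx
    refine Set.mem_iUnion.mpr ⟨i, ?_⟩
    rcases hi with h | h
    · right; simp [h]
    · simp only [Set.mem_singleton_iff] at h
      left; rw [h, neg_neg]

lemma closure_neg_set (s : Set (EuclideanSpace ℝ (Fin d))) : closure (-s) = -closure s := by
  have h1 : ∀ t : Set (EuclideanSpace ℝ (Fin d)),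
      -t = (Homeomorph.neg (EuclideanSpace ℝ (Fin d))) ⁻¹' t := by
    intro t; ext x; simp [Set.mem_neg]
  rw [h1, h1, (Homeomorph.neg (EuclideanSpace ℝ (Fin d))).preimage_closure]

lemma ff_neg (i0 i1 i2 : Fin d) : ∀ v ∈ FF i0 i1 i2, -v ∈ FF i0 i1 i2 := by
  have hXX : -(XX i0 i1 i2) = XX i0 i1 i2 := by
    ext x
    rw [Set.mem_neg]
    constructor
    · intro h
      have := xx_neg i0 i1 i2 _ h
      rwa [neg_neg] at this
    · intro h
      exact xx_neg i0 i1 i2 x h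
  have hFF : -(FF i0 i1 i2) = FF i0 i1 i2 := by
    unfold FF
    rw [← closure_neg_set, ← convexHull_neg, hXX]
  intro v hv
  have h2 : -v ∈ -(FF i0 i1 i2) := Set.neg_mem_neg.mpr hv
  rwa [hFF] at h2

lemma member (i0 i1 i2 : Fin d) {k j : ℕ} (hj : j ∈ AAset k) :
    eps k • Qp i0 i1 j + ttt k • sing i2 ∈ FF i0 i1 i2 := by
  apply subset_closure
  apply subset_convexHull
  left
  exact ⟨k, j, hj, 1, 1, Or.inl rfl, Or.inl rfl, by rw [one_mul, one_mul]⟩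

lemma ff_interior (i0 i1 i2 : Fin d) : (interior (FF i0 i1 i2)).Nonempty := by
  have hconv : Convex ℝ (FF i0 i1 i2) := (convex_convexHull ℝ _).closure
  rw [hconv.interior_nonempty_iff_affineSpan_eq_top]
  have hsub : XX i0 i1 i2 ⊆ FF i0 i1 i2 :=
    (subset_convexHull ℝ _).trans subset_closure
  have hmem : ∀ i : Fin d, (4⁻¹:ℝ) • sing i ∈ XX i0 i1 i2 := by
    intro i
    exact Or.inr (Set.mem_iUnion.mpr ⟨i, Or.inl rfl⟩)
  have hmem' : ∀ i : Fin d, -((4⁻¹:ℝ) • sing i) ∈ XX i0 i1 i2 := by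
    intro i
    exact Or.inr (Set.mem_iUnion.mpr ⟨i, Or.inr rfl⟩)
  suffices h : affineSpan ℝ (XX i0 i1 i2) = ⊤ by
    exact top_unique (h ▸ affineSpan_mono ℝ hsub)
  have hne : (XX i0 i1 i2).Nonempty := ⟨_, hmem i0⟩
  rw [AffineSubspace.affineSpan_eq_top_iff_vectorSpan_eq_top_of_nonempty ℝ _ _ hne]
  apply top_unique
  have hbasis := (EuclideanSpace.basisFun (Fin d) ℝ).toBasis.span_eq
  rw [← hbasis]
  apply Submodule.span_le.mpr
  rintro y ⟨i, rfl⟩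
  have hy : (EuclideanSpace.basisFun (Fin d) ℝ).toBasis i = sing i := by
    rw [OrthonormalBasis.coe_toBasis]
    exact EuclideanSpace.basisFun_apply (𝕜 := ℝ) (ι := Fin d) i
  have h3 : ((4⁻¹:ℝ) • sing i) -ᵥ (-((4⁻¹:ℝ) • sing i)) ∈ vectorSpan ℝ (XX i0 i1 i2) := by
    rw [vectorSpan_def]
    exact Submodule.subset_span (Set.vsub_mem_vsub (hmem i) (hmem' i))
  have h4 : ((4⁻¹:ℝ) • sing i) -ᵥ (-((4⁻¹:ℝ) • sing i)) = (2⁻¹:ℝ) • sing i := by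
    rw [vsub_eq_sub, sub_neg_eq_add, ← add_smul]
    norm_num
  rw [h4] at h3
  have h5 : (sing i : EuclideanSpace ℝ (Fin d)) = (2:ℝ) • ((2⁻¹:ℝ) • sing i) := by
    rw [smul_smul]; norm_num
  rw [hy, h5]
  exact Submodule.smul_mem _ 2 h3

lemma Qp_coord0 (i0 i1 : Fin d) (h01 : i0 ≠ i1) (j : ℕ) :
    Qp i0 i1 j i0 = Real.cos (aaa j) := by
  simp only [Qp, sing, PiLp.add_apply, PiLp.smul_apply, EuclideanSpace.single_apply,
    smul_eq_mul]
  rw [if_neg h01, if_true]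
  ring

lemma Qp_injective (i0 i1 : Fin d) (h01 : i0 ≠ i1) : Function.Injective (Qp i0 i1) := by
  intro j j' h
  have h0 : Qp i0 i1 j i0 = Qp i0 i1 j' i0 := congrArg (fun v => v i0) h
  rw [Qp_coord0 i0 i1 h01, Qp_coord0 i0 i1 h01] at h0
  have hpi := Real.pi_gt_three
  have hicc : ∀ p : ℕ, aaa p ∈ Set.Icc 0 Real.pi := fun p =>
    ⟨(aaa_pos p).le, (aaa_le_one p).trans (by linarith)⟩
  have heq : aaa j = aaa j' := Real.injOn_cos (hicc j) (hicc j') h0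
  by_contra hne
  simp only [aaa] at heq
  rcases Nat.lt_or_ge j j' with hlt | hge
  · exact absurd heq.symm (ne_of_lt (pow_lt_pow_right_of_lt_one₀ (by norm_num) (by norm_num) hlt))
  · have hlt : j' < j := by omega
    exact absurd heq (ne_of_lt (pow_lt_pow_right_of_lt_one₀ (by norm_num) (by norm_num) hlt))

end VCAux


/-- For every `d ≥ 3` there is a symmetric convex body `F ⊆ ℝ^d` (closed, bounded, convex,
with nonempty interior, symmetric about the origin) — equivalently the unit ball of a norm
on `ℝ^d` — whose family of positive scalings and translates has infinite VC dimension: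
it shatters finite sets of every cardinality. -/
theorem exists_norm_with_infinite_vc_dim (d : ℕ) (hd : 3 ≤ d) :
    ∃ F : Set (EuclideanSpace ℝ (Fin d)),
      IsClosed F ∧ Bornology.IsBounded F ∧ Convex ℝ F ∧ (interior F).Nonempty ∧
      (∀ v ∈ F, -v ∈ F) ∧
      ∀ n : ℕ, ∃ S : Finset (EuclideanSpace ℝ (Fin d)), S.card = n ∧
        Shatters {B | ∃ l : ℝ, 0 < l ∧ ∃ r : EuclideanSpace ℝ (Fin d),
          B = (fun v => l • v + r) '' F} S := by
  classical
  have h0d : 0 < d := by omega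
  have h1d : 1 < d := by omega
  have h2d : 2 < d := by omega
  set i0 : Fin d := ⟨0, h0d⟩ with hi0
  set i1 : Fin d := ⟨1, h1d⟩ with hi1
  set i2 : Fin d := ⟨2, h2d⟩ with hi2
  have h01 : i0 ≠ i1 := by simp [hi0, hi1, Fin.ext_iff]
  have h02 : i0 ≠ i2 := by simp [hi0, hi2, Fin.ext_iff]
  have h12 : i1 ≠ i2 := by simp [hi1, hi2, Fin.ext_iff]
  refine ⟨FF i0 i1 i2, isClosed_closure,
    Metric.isBounded_closedBall.subset (ff_bounded i0 i1 i2),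
    (convex_convexHull ℝ _).closure, ff_interior i0 i1 i2, ff_neg i0 i1 i2, ?_⟩
  intro n
  refine ⟨(Finset.range n).image (fun j => Qp i0 i1 j), ?_, ?_⟩
  · rw [Finset.card_image_of_injective _ (Qp_injective i0 i1 h01), Finset.card_range]
  · intro A' hA'
    set B : Finset ℕ := (Finset.range n).filter (fun j => Qp i0 i1 j ∈ A') with hB
    have hAB : (A' : Set (EuclideanSpace ℝ (Fin d))) = (fun j => Qp i0 i1 j) '' (B : Set ℕ) := by
      ext x
      constructor
      · intro hx
        have hxS := hA' (Finset.mem_coe.mp hx)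
        obtain ⟨j, hjn, rfl⟩ := Finset.mem_image.mp hxS
        exact ⟨j, Finset.mem_coe.mpr (Finset.mem_filter.mpr ⟨hjn, Finset.mem_coe.mp hx⟩), rfl⟩
      · rintro ⟨j, hjB, rfl⟩
        exact Finset.mem_coe.mpr (Finset.mem_filter.mp (Finset.mem_coe.mp hjB)).2
    rcases B.eq_empty_or_nonempty with hBe | hBne
    · have hA'e : (A' : Set (EuclideanSpace ℝ (Fin d))) = ∅ := by
        rw [hAB, hBe]; simp
      refine ⟨_, ⟨1, one_pos, (7:ℝ) • sing i2, rfl⟩, ?_⟩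
      rw [hA'e, Set.eq_empty_iff_forall_notMem]
      rintro x ⟨hxS, hxc⟩
      obtain ⟨v, hv, hvx⟩ := hxc
      obtain ⟨j, hjn, rfl⟩ := Finset.mem_image.mp (Finset.mem_coe.mp hxS)
      have hv3 : ‖v‖ ≤ 3 := by
        have := ff_bounded i0 i1 i2 hv
        rwa [Metric.mem_closedBall, dist_zero_right] at this
      have hveq : v = Qp i0 i1 j - (7:ℝ) • sing i2 := by
        simp only [one_smul] at hvx
        rw [← hvx]; abel
      have h7 : ‖(7:ℝ) • (sing i2 : EuclideanSpace ℝ (Fin d))‖ = 7 := by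
        rw [norm_smul, norm_sing, mul_one, Real.norm_eq_abs]; norm_num
      have hQ := norm_Qp_le i0 i1 j
      have h8 := norm_sub_norm_le ((7:ℝ) • (sing i2 : EuclideanSpace ℝ (Fin d))) (Qp i0 i1 j)
      rw [norm_sub_rev] at h8
      rw [hveq] at hv3
      linarith
    · set k := Encodable.encode B with hk
      have hAAk : AAset k = B := AAset_encode hBne
      have hek := eps_pos k
      refine ⟨_, ⟨(eps k)⁻¹, inv_pos.mpr hek, -(((eps k)⁻¹ * ttt k) • sing i2), rfl⟩, ?_⟩
      have e1 : eps k * (eps k)⁻¹ = 1 := mul_inv_cancel₀ hek.ne'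
      have e2 : (eps k)⁻¹ * eps k = 1 := inv_mul_cancel₀ hek.ne'
      have e3 : eps k * ((eps k)⁻¹ * ttt k) = ttt k := by rw [← mul_assoc, e1, one_mul]
      have hchar : ∀ p : EuclideanSpace ℝ (Fin d),
          (p ∈ (fun v => (eps k)⁻¹ • v + -(((eps k)⁻¹ * ttt k) • sing i2)) '' FF i0 i1 i2)
          ↔ eps k • p + ttt k • sing i2 ∈ FF i0 i1 i2 := by
        intro p
        constructor
        · rintro ⟨v, hv, rfl⟩
          have hsimp : eps k • ((eps k)⁻¹ • v + -(((eps k)⁻¹ * ttt k) • sing i2))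
              + ttt k • sing i2 = v := by
            rw [smul_add, smul_neg, smul_smul, smul_smul, e1, e3, one_smul]
            abel
          rw [hsimp]; exact hv
        · intro hv
          refine ⟨eps k • p + ttt k • sing i2, hv, ?_⟩
          show (eps k)⁻¹ • (eps k • p + ttt k • sing i2)
              + -(((eps k)⁻¹ * ttt k) • sing i2) = p
          rw [smul_add, smul_smul, e2, one_smul, smul_smul]
          abel
      ext x
      constructor
      · rintro ⟨hxS, hxc⟩
        obtain ⟨j, hjn, rfl⟩ := Finset.mem_image.mp (Finset.mem_coe.mp hxS)
        rw [hchar] at hxc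
        by_cases hjB : j ∈ B
        · rw [hAB]
          exact ⟨j, Finset.mem_coe.mpr hjB, rfl⟩
        · exact absurd hxc (exclusion i0 i1 i2 h01 h02 h12 (hAAk ▸ hjB))
      · intro hx
        rw [hAB] at hx
        obtain ⟨j, hjB, rfl⟩ := hx
        have hjB' : j ∈ B := Finset.mem_coe.mp hjB
        have hjn : j ∈ Finset.range n := (Finset.mem_filter.mp hjB').1
        refine ⟨?_, ?_⟩
        · exact Finset.mem_coe.mpr (Finset.mem_image.mpr ⟨j, hjn, rfl⟩)
        · rw [hchar]
          exact member i0 i1 i2 (hAAk ▸ hjB')
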